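/- For every non-negative integer n and every real number t, ∫_0^t ((−1)^n·w_n(τ²/2 − 1) − 1)/τ dτ = Σ_{k=1}^{n} (−1)^k·v_{2k}(t)/(2k) − H_n(1), where the integrand extends continuously to τ = 0 (indeed (−1)^n·w_n(τ²/2−1) − 1 is a polynomial in τ divisible by τ²). -/

import Mathlib

/-- Lucas sequence `v_n(x)` of real argument: `v_0 = 2`, `v_1 = x`, `v_n = x v_{n-1} - v_{n-2}`. -/
noncomputable def lucasVR (x : ℝ) : ℕ → ℝ
  | 0 => 2
  | 1 => x
  | n + 2 => x * lucasVR x (n + 1) - lucasVR x n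

/-- The sequence `w_n(x)` of real argument: `w_0 = 1`, `w_1 = 1 + 2x`, `w_{n+1} = 2x w_n - w_{n-1}`. -/
noncomputable def wSeqR (x : ℝ) : ℕ → ℝ
  | 0 => 1
  | 1 => 1 + 2 * x
  | n + 2 => 2 * x * wSeqR x (n + 1) - wSeqR x n

noncomputable def lucasUR (x : ℝ) : ℕ → ℝ
  | 0 => 0
  | 1 => 1
  | n + 2 => x * lucasUR x (n + 1) - lucasUR x n

lemma lucasUR_add_two (x : ℝ) (n : ℕ) :
    lucasUR x (n + 2) = x * lucasUR x (n + 1) - lucasUR x n := rfl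

lemma lucasVR_add_two (x : ℝ) (n : ℕ) :
    lucasVR x (n + 2) = x * lucasVR x (n + 1) - lucasVR x n := rfl

lemma v_eq_u (x : ℝ) : ∀ m : ℕ, lucasVR x (m + 1) = lucasUR x (m + 2) - lucasUR x m ∧
    lucasVR x (m + 2) = lucasUR x (m + 3) - lucasUR x (m + 1) := by
  intro m
  induction m with
  | zero =>
    constructor
    · show lucasVR x 1 = lucasUR x 2 - lucasUR x 0
      simp [lucasVR, lucasUR]
    · show lucasVR x 2 = lucasUR x 3 - lucasUR x 1
      rw [lucasVR_add_two x 0, lucasUR_add_two x 1, lucasUR_add_two x 0]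
      simp [lucasVR, lucasUR]; ring
  | succ m ih =>
    refine ⟨ih.2, ?_⟩
    show lucasVR x (m + 3) = lucasUR x (m + 4) - lucasUR x (m + 2)
    have eV : lucasVR x (m + 3) = x * lucasVR x (m + 2) - lucasVR x (m + 1) :=
      lucasVR_add_two x (m + 1)
    have eU4 : lucasUR x (m + 4) = x * lucasUR x (m + 3) - lucasUR x (m + 2) :=
      lucasUR_add_two x (m + 2)
    have eU2 : lucasUR x (m + 2) = x * lucasUR x (m + 1) - lucasUR x m :=
      lucasUR_add_two x m
    rw [eV, ih.1, ih.2, eU4]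
    linear_combination eU2

lemma u_cont : ∀ m : ℕ, Continuous (fun x => lucasUR x m) ∧
    Continuous (fun x => lucasUR x (m + 1)) := by
  intro m
  induction m with
  | zero =>
    exact ⟨by simp [lucasUR]; exact continuous_const, by simp [lucasUR]; exact continuous_const⟩
  | succ m ih =>
    refine ⟨ih.2, ?_⟩
    have : (fun x => lucasUR x (m + 2)) =
        fun x => x * lucasUR x (m + 1) - lucasUR x m := by
      funext x; exact lucasUR_add_two x m
    rw [this]
    exact ((continuous_id.mul ih.2).sub ih.1)

lemma v_deriv : ∀ m : ℕ, (∀ x : ℝ, HasDerivAt (fun y => lucasVR y m) ((m : ℝ) * lucasUR x m) x) ∧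
    (∀ x : ℝ, HasDerivAt (fun y => lucasVR y (m + 1)) ((((m + 1 : ℕ) : ℝ)) * lucasUR x (m + 1)) x) := by
  intro m
  induction m with
  | zero =>
    constructor
    · intro x
      simp only [lucasVR, lucasUR, Nat.cast_zero, zero_mul]
      exact hasDerivAt_const x 2
    · intro x
      simp only [lucasVR, lucasUR]
      simpa using hasDerivAt_id' x
  | succ m ih =>
    refine ⟨ih.2, ?_⟩
    intro x
    have h : HasDerivAt (fun y => y * lucasVR y (m + 1) - lucasVR y m)
        (1 * lucasVR x (m + 1) + x * (((m + 1 : ℕ) : ℝ) * lucasUR x (m + 1))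
          - (m : ℝ) * lucasUR x m) x :=
      ((hasDerivAt_id x).mul (ih.2 x)).sub (ih.1 x)
    have heq : (fun y => lucasVR y (m + 2)) = fun y => y * lucasVR y (m + 1) - lucasVR y m := by
      funext y; exact lucasVR_add_two y m
    rw [show (m : ℕ) + 1 + 1 = m + 2 from rfl, heq]
    convert h using 1
    have hv := (v_eq_u x m).1
    rw [lucasUR_add_two x m] at hv
    rw [lucasUR_add_two x m, hv]
    push_cast
    ring

lemma v_zero : ∀ k : ℕ, lucasVR 0 (2 * k) = 2 * (-1 : ℝ) ^ k := by
  intro k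
  induction k with
  | zero => simp [lucasVR]
  | succ k ih =>
    rw [show 2 * (k + 1) = 2 * k + 2 from by ring, lucasVR_add_two, ih]
    ring

lemma int_u (k : ℕ) (hk : 1 ≤ k) (t : ℝ) :
    ∫ τ in (0:ℝ)..t, lucasUR τ (2 * k)
      = lucasVR t (2 * k) / (2 * (k : ℝ)) - lucasVR 0 (2 * k) / (2 * (k : ℝ)) := by
  have hne : (2 * (k : ℝ)) ≠ 0 := by positivity
  have hd : ∀ x ∈ Set.uIcc (0:ℝ) t,
      HasDerivAt (fun y => lucasVR y (2 * k) / (2 * (k : ℝ))) (lucasUR x (2 * k)) x := by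
    intro x _
    have := ((v_deriv (2 * k)).1 x).div_const (2 * (k : ℝ))
    exact this.congr_deriv (by push_cast; rw [div_eq_iff hne]; ring)
  have hint : IntervalIntegrable (fun τ => lucasUR τ (2 * k)) MeasureTheory.volume 0 t :=
    ((u_cont (2 * k)).1).intervalIntegrable 0 t
  exact intervalIntegral.integral_eq_sub_of_hasDerivAt hd hint

lemma wSeqR_add_two (x : ℝ) (n : ℕ) :
    wSeqR x (n + 2) = 2 * x * wSeqR x (n + 1) - wSeqR x n := rfl

lemma lucasUR_add_four (x : ℝ) (n : ℕ) :
    lucasUR x (n + 4) = (x ^ 2 - 2) * lucasUR x (n + 2) - lucasUR x n := by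
  have h1 := lucasUR_add_two x (n + 2)
  have h2 := lucasUR_add_two x (n + 1)
  have h3 := lucasUR_add_two x n
  have : n + 2 + 2 = n + 4 := by ring
  rw [this] at h1
  have : n + 1 + 2 = n + 3 := by ring
  rw [this] at h2
  rw [h1, h2, h3]; ring

lemma w_eq_u (x : ℝ) : ∀ n : ℕ, wSeqR (x ^ 2 / 2 - 1) n = lucasUR x (2 * n + 1) ∧
    wSeqR (x ^ 2 / 2 - 1) (n + 1) = lucasUR x (2 * n + 3) := by
  intro n
  induction n with
  | zero =>
    constructor
    · simp [wSeqR, lucasUR]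
    · show wSeqR _ 1 = lucasUR x 3
      have : lucasUR x 3 = x * lucasUR x 2 - lucasUR x 1 := rfl
      rw [this]
      simp [wSeqR, lucasUR]; ring
  | succ m ih =>
    refine ⟨by rw [show 2*(m+1)+1 = 2*m+3 from by ring, ih.2], ?_⟩
    have h1 : wSeqR (x ^ 2 / 2 - 1) (m + 2) =
        2 * (x ^ 2 / 2 - 1) * wSeqR (x ^ 2 / 2 - 1) (m + 1) - wSeqR (x ^ 2 / 2 - 1) m :=
      wSeqR_add_two _ m
    have e1 : m + 1 + 1 = m + 2 := by ring
    have e2 : 2 * (m + 1) + 3 = 2 * m + 1 + 4 := by ring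
    rw [e1, h1, e2, lucasUR_add_four, ih.1, ih.2]
    have e3 : 2 * m + 1 + 2 = 2 * m + 3 := by ring
    rw [e3]; ring

lemma key_sum (x : ℝ) : ∀ n : ℕ, (-1 : ℝ) ^ n * lucasUR x (2 * n + 1) =
    1 + x * ∑ k ∈ Finset.Icc 1 n, (-1 : ℝ) ^ k * lucasUR x (2 * k) := by
  intro n
  induction n with
  | zero => simp [lucasUR]
  | succ m ih =>
    rw [Finset.sum_Icc_succ_top (by omega : 1 ≤ m + 1)]
    have e1 : 2 * (m + 1) + 1 = 2 * m + 1 + 2 := by ring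
    have e2 : 2 * (m + 1) = 2 * m + 2 := by ring
    rw [e1, lucasUR_add_two, e2]
    have e3 : 2 * m + 1 + 1 = 2 * m + 2 := by ring
    rw [e3, pow_succ]
    linear_combination ih

theorem stmt15 (n : ℕ) (t : ℝ) :
    ∫ τ in (0:ℝ)..t, ((-1 : ℝ) ^ n * wSeqR (τ ^ 2 / 2 - 1) n - 1) / τ
      = ∑ k ∈ Finset.Icc 1 n, (-1 : ℝ) ^ k * lucasVR t (2 * k) / (2 * (k : ℝ))
        - ∑ k ∈ Finset.Icc 1 n, 1 / (k : ℝ) := by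
  have hcong : ∀ᵐ τ ∂(MeasureTheory.volume : MeasureTheory.Measure ℝ),
      ((-1 : ℝ) ^ n * wSeqR (τ ^ 2 / 2 - 1) n - 1) / τ
        = ∑ k ∈ Finset.Icc 1 n, (-1 : ℝ) ^ k * lucasUR τ (2 * k) := by
    have hsub : {τ : ℝ | ¬ (((-1 : ℝ) ^ n * wSeqR (τ ^ 2 / 2 - 1) n - 1) / τ
        = ∑ k ∈ Finset.Icc 1 n, (-1 : ℝ) ^ k * lucasUR τ (2 * k))} ⊆ {0} := by
      intro τ hτ
      simp only [Set.mem_setOf_eq] at hτ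
      simp only [Set.mem_singleton_iff]
      by_contra h0
      apply hτ
      rw [(w_eq_u τ n).1, key_sum τ n]
      field_simp
      ring
    exact MeasureTheory.ae_iff.mpr
      (MeasureTheory.measure_mono_null hsub (MeasureTheory.measure_singleton 0))
  rw [intervalIntegral.integral_congr_ae (hcong.mono fun τ h _ => h)]
  have hint : ∀ k ∈ Finset.Icc 1 n,
      IntervalIntegrable (fun τ => (-1 : ℝ) ^ k * lucasUR τ (2 * k)) MeasureTheory.volume 0 t :=
    fun k _ => (continuous_const.mul (u_cont (2 * k)).1).intervalIntegrable 0 t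
  rw [intervalIntegral.integral_finset_sum hint]
  have heach : ∀ k ∈ Finset.Icc 1 n,
      ∫ τ in (0:ℝ)..t, (-1 : ℝ) ^ k * lucasUR τ (2 * k)
        = (-1 : ℝ) ^ k * lucasVR t (2 * k) / (2 * (k : ℝ)) - 1 / (k : ℝ) := by
    intro k hk
    have hk1 : 1 ≤ k := (Finset.mem_Icc.mp hk).1
    have hk0 : (k : ℝ) ≠ 0 := Nat.cast_ne_zero.mpr (by omega)
    rw [intervalIntegral.integral_const_mul, int_u k hk1 t, v_zero k]
    have hsq : ((-1 : ℝ)) ^ (k * 2) = 1 := Even.neg_one_pow ⟨k, by ring⟩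
    have hsq2 : ((-1 : ℝ) ^ k) ^ 2 = 1 := by rw [← pow_mul]; exact hsq
    field_simp
    linear_combination (-2) * hsq2
  rw [Finset.sum_congr rfl heach, Finset.sum_sub_distrib]
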